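/- Define derivations ∂₁ and ∂₂ of the group ring ℂH₃ on basis elements by ∂₁(U^p V^q W^r) = p·U^p V^q W^r and ∂₂(U^p V^q W^r) = q·U^p V^q W^r. Then ∂₁ and ∂₂ are well-defined derivations of ℂH₃, and neither is inner. -/

import Mathlib

open Matrix

abbrev M3 := Matrix (Fin 3) (Fin 3) ℤ

/-- The unitriangular matrix with given entries, as a unit. -/
def heisU (x y z : ℤ) : (M3)ˣ where
  val := !![1, x, z; 0, 1, y; 0, 0, 1]
  inv := !![1, -x, x*y - z; 0, 1, -y; 0, 0, 1]
  val_inv := by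
    ext i j
    fin_cases i <;> fin_cases j <;>
      simp [Matrix.mul_apply, Fin.sum_univ_three, Matrix.one_apply, Matrix.vecHead, Matrix.vecTail] <;> ring
  inv_val := by
    ext i j
    fin_cases i <;> fin_cases j <;>
      simp [Matrix.mul_apply, Fin.sum_univ_three, Matrix.one_apply, Matrix.vecHead, Matrix.vecTail] <;> ring

lemma heisU_mul (x y z x' y' z' : ℤ) :
    heisU x y z * heisU x' y' z' = heisU (x+x') (y+y') (z+z'+x*y') := by
  ext i j
  fin_cases i <;> fin_cases j <;>
    simp [heisU, Matrix.mul_apply, Fin.sum_univ_three, Matrix.vecHead, Matrix.vecTail] <;> ring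

lemma heisU_inv (x y z : ℤ) : (heisU x y z)⁻¹ = heisU (-x) (-y) (x*y - z) := by
  ext i j
  fin_cases i <;> fin_cases j <;> simp [heisU, Matrix.vecHead, Matrix.vecTail] <;> ring

/-- The discrete Heisenberg group, as the group of 3×3 upper-triangular
integer matrices with 1's on the diagonal. -/
def Heis : Subgroup (M3)ˣ where
  carrier := {A | ∃ x y z : ℤ, A = heisU x y z}
  one_mem' := ⟨0, 0, 0, by ext i j; fin_cases i <;> fin_cases j <;> simp [heisU, Matrix.one_apply, Matrix.vecHead, Matrix.vecTail]⟩
  mul_mem' := by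
    rintro A B ⟨x, y, z, rfl⟩ ⟨x', y', z', rfl⟩
    exact ⟨_, _, _, heisU_mul x y z x' y' z'⟩
  inv_mem' := by
    rintro A ⟨x, y, z, rfl⟩
    exact ⟨_, _, _, heisU_inv x y z⟩

/-- The generator `U` of `H₃`. -/
def Ug : Heis := ⟨heisU 1 0 0, ⟨1, 0, 0, rfl⟩⟩
/-- The generator `V` of `H₃`. -/
def Vg : Heis := ⟨heisU 0 1 0, ⟨0, 1, 0, rfl⟩⟩
/-- The central generator `W = VUV⁻¹U⁻¹`. -/
def Wg : Heis := Vg * Ug * Vg⁻¹ * Ug⁻¹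

/-- The group ring `ℂH₃`. -/
abbrev CH3 := MonoidAlgebra ℂ Heis

/-- `W` as an element of the group ring. -/
noncomputable def WA : CH3 := MonoidAlgebra.of ℂ Heis Wg


noncomputable def der (φ : Heis → ℂ) : CH3 →ₗ[ℂ] CH3 :=
  (Finsupp.lsum ℂ fun g => φ g • (MonoidAlgebra.lsingle g : ℂ →ₗ[ℂ] CH3)) ∘ₗ
    (MonoidAlgebra.coeffLinearEquiv ℂ).toLinearMap

lemma der_single (φ : Heis → ℂ) (g : Heis) (c : ℂ) :
    der φ (MonoidAlgebra.single g c) = φ g • MonoidAlgebra.single g c := by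
  rw [der]
  change Finsupp.lsum ℂ _ (Finsupp.single g c) = _
  erw [Finsupp.lsum_single]
  rfl

lemma der_leibniz (φ : Heis → ℂ) (hφ : ∀ g h : Heis, φ (g * h) = φ g + φ h)
    (a b : CH3) : der φ (a * b) = der φ a * b + a * der φ b := by
  induction a using MonoidAlgebra.induction_linear with
  | zero => simp
  | add f g hf hg =>
    rw [add_mul, map_add, hf, hg]; simp only [map_add, add_mul]; abel
  | single g c =>
    induction b using MonoidAlgebra.induction_linear with
    | zero => simp
    | add f₁ g₁ h₁ h₂ =>
      rw [mul_add, map_add, h₁, h₂]; simp only [map_add, mul_add]; abel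
    | single h c' =>
      rw [show (MonoidAlgebra.single g c : CH3) * MonoidAlgebra.single h c'
            = MonoidAlgebra.single (g * h) (c * c') from
          MonoidAlgebra.single_mul_single _ _ _ _]
      rw [der_single, der_single, der_single, hφ, add_smul, smul_mul_assoc,
        mul_smul_comm, MonoidAlgebra.single_mul_single]

lemma not_inner (φ : Heis → ℂ) (g : Heis) (hg : φ g ≠ 0) :
    ¬(∃ x : CH3, ∀ a : CH3, der φ a = a * x - x * a) := by
  rintro ⟨x, hx⟩
  have h := hx (MonoidAlgebra.single g 1)
  rw [der_single] at h
  have h3 := congrArg (fun y : CH3 => y.coeff g) h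
  simp only [MonoidAlgebra.coeff_sub, Finsupp.coe_sub, Pi.sub_apply, MonoidAlgebra.smul_single',
    MonoidAlgebra.coeff_single, MonoidAlgebra.coeff_mul_single_apply, MonoidAlgebra.coeff_single_mul_apply, mul_inv_cancel,
    inv_mul_cancel, smul_eq_mul, mul_one, one_mul, sub_self, Finsupp.single_eq_same] at h3
  exact hg h3

lemma entry01_add (g h : Heis) :
    (((((g * h : Heis) : (M3)ˣ) : M3) 0 1 : ℤ) : ℂ)
      = ((((g : (M3)ˣ) : M3) 0 1 : ℤ) : ℂ) + ((((h : (M3)ˣ) : M3) 0 1 : ℤ) : ℂ) := by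
  obtain ⟨x, y, z, hg⟩ := g.2
  obtain ⟨x', y', z', hh⟩ := h.2
  have : ((g * h : Heis) : (M3)ˣ) = (g : (M3)ˣ) * (h : (M3)ˣ) := rfl
  rw [this, hg, hh, heisU_mul]
  simp [heisU]

lemma entry12_add (g h : Heis) :
    (((((g * h : Heis) : (M3)ˣ) : M3) 1 2 : ℤ) : ℂ)
      = ((((g : (M3)ˣ) : M3) 1 2 : ℤ) : ℂ) + ((((h : (M3)ˣ) : M3) 1 2 : ℤ) : ℂ) := by
  obtain ⟨x, y, z, hg⟩ := g.2
  obtain ⟨x', y', z', hh⟩ := h.2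
  have : ((g * h : Heis) : (M3)ˣ) = (g : (M3)ˣ) * (h : (M3)ˣ) := rfl
  rw [this, hg, hh, heisU_mul]
  simp [heisU, Matrix.vecHead, Matrix.vecTail]

/-- There are derivations `∂₁, ∂₂` of `ℂH₃` with
`∂₁(U^p V^q W^r) = p · U^p V^q W^r` and `∂₂(U^p V^q W^r) = q · U^p V^q W^r`
(here `p` and `q` are read off as the `(0,1)` and `(1,2)` matrix entries),
and neither is inner. -/
theorem derivations_d1_d2 :
    ∃ d₁ d₂ : CH3 →ₗ[ℂ] CH3,
      (∀ g : Heis, d₁ (MonoidAlgebra.of ℂ Heis g) =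
        (((((g : (M3)ˣ) : M3) 0 1 : ℤ) : ℂ)) • MonoidAlgebra.of ℂ Heis g) ∧
      (∀ g : Heis, d₂ (MonoidAlgebra.of ℂ Heis g) =
        (((((g : (M3)ˣ) : M3) 1 2 : ℤ) : ℂ)) • MonoidAlgebra.of ℂ Heis g) ∧
      (∀ a b : CH3, d₁ (a * b) = d₁ a * b + a * d₁ b) ∧
      (∀ a b : CH3, d₂ (a * b) = d₂ a * b + a * d₂ b) ∧
      ¬(∃ x : CH3, ∀ a : CH3, d₁ a = a * x - x * a) ∧
      ¬(∃ x : CH3, ∀ a : CH3, d₂ a = a * x - x * a) := by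
  refine ⟨der (fun g => ((((g : (M3)ˣ) : M3) 0 1 : ℤ) : ℂ)),
    der (fun g => ((((g : (M3)ˣ) : M3) 1 2 : ℤ) : ℂ)),
    fun g => der_single _ g 1, fun g => der_single _ g 1,
    der_leibniz _ entry01_add, der_leibniz _ entry12_add,
    not_inner _ Ug ?_, not_inner _ Vg ?_⟩
  · norm_num [Ug, heisU]
  · norm_num [Vg, heisU, Matrix.vecHead, Matrix.vecTail]
    decide
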